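/- Bowen–Gibbs property: with potential φ(y) = B(w_0(y)) and pressure P = log λ, there exists a constant C ≥ 1 such that for every y ∈ {−1,1}^{ℤ₊} and every n ∈ ℤ₊, 1/C ≤ Q(y_0,…,y_n) / exp( Σ_{k=0}^{n} φ(S^k y) − (n+1)·P ) ≤ C, where S is the left shift (S y)_i = y_{i+1} and Q(y_0,…,y_n) = (cosh(J)/λ^{n+1})·Z_{0,n}(y_0,…,y_n). -/

import Mathlib

open Finset

namespace Stmt15

open Real

noncomputable def fA (J u : ℝ) : ℝ := (1/2) * (log (cosh (u+J)) - log (cosh (u-J)))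
noncomputable def fB (J u : ℝ) : ℝ := (1/2) * (log 4 + log (cosh (u+J)) + log (cosh (u-J)))

lemma fA_eq (J u : ℝ) : (1/2) * log (cosh (u+J) / cosh (u-J)) = fA J u := by
  rw [log_div (cosh_pos _).ne' (cosh_pos _).ne', fA]

lemma fB_eq (J u : ℝ) : (1/2) * log (4 * cosh (u+J) * cosh (u-J)) = fB J u := by
  rw [log_mul (by positivity) (cosh_pos _).ne', log_mul (by norm_num) (cosh_pos _).ne', fB]

lemma fA_zero (J : ℝ) : fA J 0 = 0 := by
  simp [fA, show (0:ℝ) - J = -J by ring, Real.cosh_neg]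

lemma hasDerivAt_logcosh (c u : ℝ) :
    HasDerivAt (fun u => log (cosh (u + c))) (tanh (u + c)) u := by
  have h1 : HasDerivAt (fun u : ℝ => u + c) 1 u := (hasDerivAt_id u).add_const c
  have h2 : HasDerivAt (fun u : ℝ => cosh (u + c)) (sinh (u + c) * 1) u :=
    h1.cosh
  have h3 := h2.log (cosh_pos (u + c)).ne'
  simpa [Real.tanh_eq_sinh_div_cosh] using h3

lemma hasDerivAt_logcosh' (c u : ℝ) :
    HasDerivAt (fun u => log (cosh (u - c))) (tanh (u - c)) u := by
  simpa [sub_eq_add_neg] using hasDerivAt_logcosh (-c) u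

lemma hasDerivAt_fA (J u : ℝ) :
    HasDerivAt (fA J) ((1/2) * (tanh (u+J) - tanh (u-J))) u := by
  have hfa : fA J = fun y => (1/2:ℝ) * (log (cosh (y+J)) - log (cosh (y-J))) := by
    funext y; rw [fA]
  rw [hfa]
  exact ((hasDerivAt_logcosh J u).sub (hasDerivAt_logcosh' J u)).const_mul (1/2 : ℝ)

lemma hasDerivAt_fB (J u : ℝ) :
    HasDerivAt (fB J) ((1/2) * (tanh (u+J) + tanh (u-J))) u := by
  have hfb : fB J = fun y => (1/2:ℝ) * (log 4 + log (cosh (y+J)) + log (cosh (y-J))) := by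
    funext y; rw [fB]
  rw [hfb]
  have := (((hasDerivAt_const u (log 4)).add (hasDerivAt_logcosh J u)).add
    (hasDerivAt_logcosh' J u)).const_mul (1/2 : ℝ)
  exact this.congr_deriv (by ring)

lemma continuous_fA (J : ℝ) : Continuous (fA J) := by
  have : Differentiable ℝ (fA J) := fun u => (hasDerivAt_fA J u).differentiableAt
  exact this.continuous

lemma abs_sinh_lt (x : ℝ) : |sinh x| < cosh x := by
  rw [abs_lt]
  constructor
  · nlinarith [Real.cosh_add_sinh x, Real.exp_pos x]
  · nlinarith [Real.cosh_sub_sinh x, Real.exp_pos (-x)]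

lemma abs_tanh_le_one (x : ℝ) : |tanh x| ≤ 1 := by
  rw [Real.tanh_eq_sinh_div_cosh, abs_div, abs_of_pos (cosh_pos x)]
  exact (div_le_one (cosh_pos x)).mpr (abs_sinh_lt x).le

lemma abs_tanh_lt_one (x : ℝ) : |tanh x| < 1 := by
  rw [Real.tanh_eq_sinh_div_cosh, abs_div, abs_of_pos (cosh_pos x)]
  exact (div_lt_one (cosh_pos x)).mpr (abs_sinh_lt x)

lemma cosh_mul_cosh_ge (J u : ℝ) : cosh J ^ 2 ≤ cosh (u+J) * cosh (u-J) := by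
  have h1 : cosh (u+J) * cosh (u-J) = (cosh (2*u) + cosh (2*J)) / 2 := by
    have ha := Real.cosh_add (u+J) (u-J)
    have hb := Real.cosh_sub (u+J) (u-J)
    have e1 : (u+J) + (u-J) = 2*u := by ring
    rw [e1] at ha
    have e2 : (u+J) - (u-J) = 2*J := by ring
    rw [e2] at hb
    linarith
  have h2 : cosh (2*J) = 2 * cosh J ^ 2 - 1 := by
    rw [Real.cosh_two_mul]
    linarith [Real.cosh_sq_sub_sinh_sq J]
  have h3 : (1:ℝ) ≤ cosh (2*u) := Real.one_le_cosh _
  nlinarith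

lemma tanh_diff_bound (J u : ℝ) :
    |(1/2) * (tanh (u+J) - tanh (u-J))| ≤ |tanh J| := by
  have hD : (0:ℝ) < cosh (u+J) * cosh (u-J) := mul_pos (cosh_pos _) (cosh_pos _)
  have key : tanh (u+J) - tanh (u-J) = sinh (2*J) / (cosh (u+J) * cosh (u-J)) := by
    rw [Real.tanh_eq_sinh_div_cosh, Real.tanh_eq_sinh_div_cosh]
    rw [div_sub_div _ _ (cosh_pos _).ne' (cosh_pos _).ne']
    congr 1
    rw [show (2:ℝ)*J = (u+J) - (u-J) by ring, Real.sinh_sub (u+J) (u-J)]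
  rw [key, abs_mul, abs_div (sinh (2*J)) (cosh (u+J) * cosh (u-J)), abs_of_pos hD,
    abs_of_pos (show (0:ℝ) < 1/2 by norm_num)]
  have h2J : |sinh (2*J)| = 2 * |sinh J| * cosh J := by
    rw [Real.sinh_two_mul, abs_mul, abs_mul, abs_of_pos (cosh_pos J)]
    norm_num
  rw [h2J, Real.tanh_eq_sinh_div_cosh, abs_div, abs_of_pos (cosh_pos J)]
  rw [show (1/2:ℝ) * (2 * |sinh J| * cosh J / (cosh (u+J) * cosh (u-J)))
      = |sinh J| * cosh J / (cosh (u+J) * cosh (u-J)) by ring]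
  rw [div_le_div_iff₀ hD (cosh_pos J)]
  nlinarith [cosh_mul_cosh_ge J u, abs_nonneg (sinh J)]

lemma fA_lipschitz (J u v : ℝ) : |fA J u - fA J v| ≤ |tanh J| * |u - v| := by
  have := Convex.norm_image_sub_le_of_norm_hasDerivWithin_le
    (f := fA J) (f' := fun w => (1/2) * (tanh (w+J) - tanh (w-J))) (s := Set.univ)
    (C := |tanh J|)
    (fun x _ => (hasDerivAt_fA J x).hasDerivWithinAt)
    (fun x _ => by rw [Real.norm_eq_abs]; exact tanh_diff_bound J x)
    convex_univ (Set.mem_univ v) (Set.mem_univ u)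
  simpa [Real.norm_eq_abs] using this

lemma fB_lipschitz (J u v : ℝ) : |fB J u - fB J v| ≤ |u - v| := by
  have := Convex.norm_image_sub_le_of_norm_hasDerivWithin_le
    (f := fB J) (f' := fun w => (1/2) * (tanh (w+J) + tanh (w-J))) (s := Set.univ)
    (C := 1)
    (fun x _ => (hasDerivAt_fB J x).hasDerivWithinAt)
    (fun x _ => by
      rw [Real.norm_eq_abs, abs_mul, abs_of_pos (show (0:ℝ) < 1/2 by norm_num)]
      have h1 := abs_tanh_le_one (x+J)
      have h2 := abs_tanh_le_one (x-J)
      have h3 := abs_add_le (tanh (x+J)) (tanh (x-J))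
      linarith)
    convex_univ (Set.mem_univ v) (Set.mem_univ u)
  simpa [Real.norm_eq_abs] using this

lemma abs_fA_le (J u : ℝ) : |fA J u| ≤ |tanh J| * |u| := by
  have := fA_lipschitz J u 0
  simpa [fA_zero] using this

lemma log_cosh_nonneg (x : ℝ) : 0 ≤ log (cosh x) :=
  Real.log_nonneg (Real.one_le_cosh x)

lemma log_cosh_le_abs (x : ℝ) : log (cosh x) ≤ |x| := by
  have h1 : cosh x ≤ Real.exp |x| := by
    rw [← Real.cosh_abs, Real.cosh_eq]
    have h := Real.exp_le_exp.mpr (neg_le_self (abs_nonneg x))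
    linarith
  calc log (cosh x) ≤ log (Real.exp |x|) := Real.log_le_log (Real.cosh_pos x) h1
    _ = |x| := Real.log_exp _

lemma fB_zero (J : ℝ) : fB J 0 = Real.log 2 + Real.log (cosh J) := by
  rw [fB, show (0:ℝ) + J = J by ring, show (0:ℝ) - J = -J by ring, Real.cosh_neg,
    show (4:ℝ) = 2^2 by norm_num, Real.log_pow]
  push_cast
  ring

lemma abs_fB_le (J M u : ℝ) (hu : |u| ≤ M) : |fB J u| ≤ Real.log 2 + |J| + M := by
  have h1 := fB_lipschitz J u 0
  have h2 : |fB J 0| ≤ Real.log 2 + |J| := by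
    rw [fB_zero, abs_of_nonneg (add_nonneg (Real.log_nonneg one_le_two) (log_cosh_nonneg J))]
    have := log_cosh_le_abs J
    linarith
  have h3 : |fB J u| ≤ |fB J u - fB J 0| + |fB J 0| := by
    calc |fB J u| = |(fB J u - fB J 0) + fB J 0| := by ring_nf
      _ ≤ |fB J u - fB J 0| + |fB J 0| := abs_add_le _ _
  have h4 : |u - 0| = |u| := by rw [sub_zero]
  rw [h4] at h1
  linarith

noncomputable def WB (Af : ℝ → ℝ) (K : ℝ) (y : ℕ → ℝ) : ℕ → ℝ → ℕ → ℝ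
  | 0, h, i => if i = 0 then K * y 0 + h else 0
  | n+1, h, i => if i = n+1 then K * y (n+1) + h else WB Af K y n (Af (K * y (n+1) + h)) i

lemma WB_gt (Af K y) : ∀ n h i, n < i → WB Af K y n h i = 0 := by
  intro n
  induction n with
  | zero => intro h i hi; rw [WB, if_neg (by omega)]
  | succ n ih =>
    intro h i hi
    rw [WB, if_neg (by omega)]
    exact ih _ _ (by omega)

lemma WB_last (Af K y) (n : ℕ) (h : ℝ) : WB Af K y n h n = K * y n + h := by
  cases n <;> simp [WB]

lemma WB_rec (Af K y) : ∀ n h i, i < n →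
    WB Af K y n h i = K * y i + Af (WB Af K y n h (i+1)) := by
  intro n
  induction n with
  | zero => intro h i hi; omega
  | succ n ih =>
    intro h i hi
    rcases Nat.lt_or_ge i n with hin | hin
    · rw [WB, if_neg (by omega), ih _ _ hin]
      congr 2
      rw [WB, if_neg (by omega)]
    · have hni : i = n := by omega
      subst hni
      have h1 : WB Af K y (i+1) h (i+1) = K * y (i+1) + h := by rw [WB, if_pos rfl]
      rw [h1, WB, if_neg (by omega), WB_last]

lemma sum_pi_bool_succ {M : Type*} [AddCommMonoid M] (n : ℕ) (F : (Fin (n+2) → Bool) → M) :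
    ∑ x : Fin (n+2) → Bool, F x = ∑ x' : Fin (n+1) → Bool, ∑ s : Bool, F (Fin.snoc x' s) := by
  rw [← (Fin.snocEquiv (fun _ : Fin (n+2) => Bool)).sum_comp F, Fintype.sum_prod_type]
  rw [Finset.sum_comm]
  apply Finset.sum_congr rfl
  intro x' _
  apply Finset.sum_congr rfl
  intro s _
  simp [Fin.snocEquiv]

lemma sum_snoc_spin1 (n : ℕ) (spin : Bool → ℝ) (x' : Fin (n+1) → Bool) (s : Bool) :
    ∑ i : Fin (n+1), spin (Fin.snoc (α := fun _ : Fin (n+2) => Bool) x' s i.castSucc)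
        * spin (Fin.snoc (α := fun _ : Fin (n+2) => Bool) x' s i.succ)
    = (∑ i : Fin n, spin (x' i.castSucc) * spin (x' i.succ))
      + spin (x' (Fin.last n)) * spin s := by
  rw [Fin.sum_univ_castSucc]
  congr 1
  · apply Finset.sum_congr rfl
    intro i _
    rw [Fin.snoc_castSucc, Fin.succ_castSucc, Fin.snoc_castSucc]
  · rw [Fin.snoc_castSucc, Fin.succ_last, Fin.snoc_last]

lemma sum_snoc_spin2 (n : ℕ) (spin : Bool → ℝ) (y : ℕ → ℝ) (x' : Fin (n+1) → Bool) (s : Bool) :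
    ∑ i : Fin (n+2), spin (Fin.snoc (α := fun _ : Fin (n+2) => Bool) x' s i) * y (i : ℕ)
    = (∑ i : Fin (n+1), spin (x' i) * y (i : ℕ)) + spin s * y (n+1) := by
  rw [Fin.sum_univ_castSucc]
  congr 1
  · apply Finset.sum_congr rfl
    intro i _
    rw [Fin.snoc_castSucc, Fin.coe_castSucc]
  · rw [Fin.snoc_last, Fin.val_last]

lemma two_cosh_eq (J g ξ : ℝ) (hξ : ξ = 1 ∨ ξ = -1) :
    2 * cosh (J * ξ + g) = Real.exp (fB J g + fA J g * ξ) := by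
  have h4 : Real.log 4 = 2 * Real.log 2 := by
    rw [show (4:ℝ) = 2^2 by norm_num, Real.log_pow]; norm_num
  rcases hξ with rfl | rfl
  · rw [fA, fB, show (1/2)*(log 4 + log (cosh (g+J)) + log (cosh (g-J)))
        + (1/2)*(log (cosh (g+J)) - log (cosh (g-J)))*1
        = Real.log 2 + Real.log (cosh (g+J)) by rw [h4]; ring]
    rw [Real.exp_add, Real.exp_log two_pos, Real.exp_log (cosh_pos _),
      show J*1+g = g+J by ring]
  · rw [fA, fB, show (1/2)*(log 4 + log (cosh (g+J)) + log (cosh (g-J)))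
        + (1/2)*(log (cosh (g+J)) - log (cosh (g-J)))*(-1)
        = Real.log 2 + Real.log (cosh (g-J)) by rw [h4]; ring]
    rw [Real.exp_add, Real.exp_log two_pos, Real.exp_log (cosh_pos _),
      show J*(-1)+g = g-J by ring]

lemma keystep (J g a ξ : ℝ) (hξ : ξ = 1 ∨ ξ = -1) :
    Real.exp (a + (J*ξ + g)) + Real.exp (a + (-(J*ξ+g)))
      = Real.exp (fB J g) * Real.exp (a + fA J g * ξ) := by
  rw [Real.exp_add a (J*ξ+g), Real.exp_add a (-(J*ξ+g)), ← mul_add]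
  rw [show Real.exp (J*ξ+g) + Real.exp (-(J*ξ+g)) = 2 * cosh (J*ξ+g) by
    rw [Real.cosh_eq]; ring]
  rw [two_cosh_eq J g ξ hξ, Real.exp_add (fB J g), Real.exp_add a]
  ring

noncomputable def Ssum (J K : ℝ) (spin : Bool → ℝ) (y : ℕ → ℝ) (n : ℕ) (h : ℝ) : ℝ :=
  ∑ x : Fin (n+1) → Bool,
    Real.exp (J * ∑ i : Fin n, spin (x i.castSucc) * spin (x i.succ)
      + K * ∑ i : Fin (n+1), spin (x i) * y i + h * spin (x (Fin.last n)))

lemma Ssum_eq (J K : ℝ) (spin : Bool → ℝ) (hspin : ∀ b, spin b = if b then 1 else -1)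
    (y : ℕ → ℝ) : ∀ n h, Ssum J K spin y n h
      = 2 * cosh (WB (fA J) K y n h 0)
        * Real.exp (∑ k ∈ Finset.range n, fB J (WB (fA J) K y n h (k+1))) := by
  have st : spin true = 1 := by rw [hspin]; rfl
  have sf : spin false = -1 := by rw [hspin]; rfl
  intro n
  induction n with
  | zero =>
    intro h
    rw [Ssum]
    rw [← (Equiv.funUnique (Fin 1) Bool).symm.sum_comp]
    rw [Fintype.sum_bool]
    have hWB : WB (fA J) K y 0 h 0 = K * y 0 + h := WB_last _ _ _ 0 h
    simp only [Finset.range_zero, Finset.sum_empty, Real.exp_zero, mul_one, hWB]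
    have e1 : ∀ b : Bool, ((Equiv.funUnique (Fin 1) Bool).symm b : Fin 1 → Bool) = fun _ => b :=
      fun b => rfl
    rw [e1, e1]
    simp only [Fin.sum_univ_zero, Fin.sum_univ_one, st, sf, Real.cosh_eq]
    rw [show (∑ x : Fin (0+1), (1:ℝ) * y ↑x) = y 0 by simp,
      show (∑ x : Fin (0+1), (-1:ℝ) * y ↑x) = -(y 0) by simp,
      show J * 0 + K * y 0 + h * 1 = K * y 0 + h by ring,
      show J * 0 + K * -(y 0) + h * (-1) = -(K * y 0 + h) by ring]
    ring
  | succ n ih =>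
    intro h
    rw [Ssum, sum_pi_bool_succ]
    have step : ∀ x' : Fin (n+1) → Bool,
        (∑ s : Bool, Real.exp (J * ∑ i : Fin (n+1),
              spin (Fin.snoc (α := fun _ : Fin (n+2) => Bool) x' s i.castSucc)
                * spin (Fin.snoc (α := fun _ : Fin (n+2) => Bool) x' s i.succ)
            + K * ∑ i : Fin (n+2), spin (Fin.snoc (α := fun _ : Fin (n+2) => Bool) x' s i) * y i
            + h * spin (Fin.snoc (α := fun _ : Fin (n+2) => Bool) x' s (Fin.last (n+1)))))
        = Real.exp (fB J (K * y (n+1) + h)) *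
            Real.exp (J * ∑ i : Fin n, spin (x' i.castSucc) * spin (x' i.succ)
              + K * ∑ i : Fin (n+1), spin (x' i) * y i
              + fA J (K * y (n+1) + h) * spin (x' (Fin.last n))) := by
      intro x'
      rw [Fintype.sum_bool]
      rw [sum_snoc_spin1, sum_snoc_spin1, sum_snoc_spin2, sum_snoc_spin2,
        Fin.snoc_last, Fin.snoc_last, st, sf]
      have hξ : spin (x' (Fin.last n)) = 1 ∨ spin (x' (Fin.last n)) = -1 := by
        cases hb : x' (Fin.last n)
        · right; rw [hb] at *; exact sf
        · left; rw [hb] at *; exact st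
      rw [show J * ((∑ i : Fin n, spin (x' i.castSucc) * spin (x' i.succ))
              + spin (x' (Fin.last n)) * 1)
            + K * ((∑ i : Fin (n+1), spin (x' i) * y i) + 1 * y (n+1)) + h * 1
          = (J * ∑ i : Fin n, spin (x' i.castSucc) * spin (x' i.succ)
              + K * ∑ i : Fin (n+1), spin (x' i) * y i)
            + (J * spin (x' (Fin.last n)) + (K * y (n+1) + h)) by ring,
        show J * ((∑ i : Fin n, spin (x' i.castSucc) * spin (x' i.succ))
              + spin (x' (Fin.last n)) * (-1))
            + K * ((∑ i : Fin (n+1), spin (x' i) * y i) + (-1) * y (n+1)) + h * (-1)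
          = (J * ∑ i : Fin n, spin (x' i.castSucc) * spin (x' i.succ)
              + K * ∑ i : Fin (n+1), spin (x' i) * y i)
            + (-(J * spin (x' (Fin.last n)) + (K * y (n+1) + h))) by ring]
      rw [keystep J (K * y (n+1) + h) _ _ hξ]
    rw [Finset.sum_congr rfl fun x' _ => step x', ← Finset.mul_sum]
    rw [show (∑ x' : Fin (n+1) → Bool,
        Real.exp (J * ∑ i : Fin n, spin (x' i.castSucc) * spin (x' i.succ)
          + K * ∑ i : Fin (n+1), spin (x' i) * y i
          + fA J (K * y (n+1) + h) * spin (x' (Fin.last n))))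
      = Ssum J K spin y n (fA J (K * y (n+1) + h)) from rfl]
    rw [ih (fA J (K * y (n+1) + h))]
    have hWB0 : WB (fA J) K y (n+1) h 0 = WB (fA J) K y n (fA J (K * y (n+1) + h)) 0 := by
      rw [WB, if_neg (by omega)]
    have hWBk : ∀ k ∈ Finset.range n,
        fB J (WB (fA J) K y (n+1) h (k+1))
          = fB J (WB (fA J) K y n (fA J (K * y (n+1) + h)) (k+1)) := by
      intro k hk
      rw [WB, if_neg (by simp at hk; omega)]
    rw [hWB0, Finset.sum_range_succ, Finset.sum_congr rfl hWBk, WB_last,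
      Real.exp_add]
    ring

end Stmt15

open Stmt15

/-- Bowen–Gibbs property: with potential `φ(y) = B(w_0(y))` and pressure
`P = log λ`, there exists a constant `C ≥ 1` such that for every `y ∈ {−1,1}^{ℤ₊}` and
every `n ∈ ℤ₊`,
`1/C ≤ Q(y_0,…,y_n) / exp( Σ_{k=0}^{n} φ(S^k y) − (n+1)·P ) ≤ C`,
where `S` is the left shift `(S y)_i = y_{i+1}` (so `(S^k y)_i = y_{i+k}`) and
`Q(y_0,…,y_n) = (cosh(J)/λ^{n+1})·Z_{0,n}(y_0,…,y_n)`. Here `W y n i = w_i^{(n)}(y)`,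
`wlim y i = w_i(y)`, and spin configurations are encoded by `x : Fin (n+1) → Bool`. -/
theorem stmt_15 (p ε : ℝ) (hp0 : 0 < p) (hp1 : p < 1) (hp2 : p ≠ 1 / 2)
    (hε0 : 0 < ε) (hε1 : ε < 1)
    (J K lam : ℝ)
    (hJ : J = (1 / 2) * Real.log ((1 - p) / p))
    (hK : K = (1 / 2) * Real.log ((1 - ε) / ε))
    (hlam : lam = 4 * Real.cosh J * Real.cosh K)
    (A B : ℝ → ℝ)
    (hA : ∀ u, A u = (1 / 2) * Real.log (Real.cosh (u + J) / Real.cosh (u - J)))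
    (hB : ∀ u, B u = (1 / 2) * Real.log (4 * Real.cosh (u + J) * Real.cosh (u - J)))
    (spin : Bool → ℝ) (hspin : ∀ b, spin b = if b then 1 else -1)
    (W : (ℕ → ℝ) → ℕ → ℕ → ℝ)
    (hW0 : ∀ (y : ℕ → ℝ) (n i : ℕ), n < i → W y n i = 0)
    (hWrec : ∀ (y : ℕ → ℝ) (n i : ℕ), i ≤ n → W y n i = K * y i + A (W y n (i + 1)))
    (wlim : (ℕ → ℝ) → ℕ → ℝ)
    (hwlim : ∀ (y : ℕ → ℝ) (i : ℕ),
      Filter.Tendsto (fun n => W y n i) Filter.atTop (nhds (wlim y i)))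
    (φ : (ℕ → ℝ) → ℝ)
    (hφ : ∀ y : ℕ → ℝ, φ y = B (wlim y 0)) :
    ∃ C ≥ (1 : ℝ),
      ∀ y : ℕ → ℝ, (∀ i, y i = 1 ∨ y i = -1) → ∀ n : ℕ,
        1 / C ≤
          (Real.cosh J / lam ^ (n + 1) *
            ∑ x : Fin (n + 1) → Bool,
              Real.exp (J * ∑ i : Fin n, spin (x i.castSucc) * spin (x i.succ)
                + K * ∑ i : Fin (n + 1), spin (x i) * y i))
          / Real.exp ((∑ k ∈ Finset.range (n + 1), φ (fun i => y (i + k)))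
              - (n + 1) * Real.log lam) ∧
        (Real.cosh J / lam ^ (n + 1) *
            ∑ x : Fin (n + 1) → Bool,
              Real.exp (J * ∑ i : Fin n, spin (x i.castSucc) * spin (x i.succ)
                + K * ∑ i : Fin (n + 1), spin (x i) * y i))
          / Real.exp ((∑ k ∈ Finset.range (n + 1), φ (fun i => y (i + k)))
              - (n + 1) * Real.log lam) ≤ C := by
  have hAe : A = fA J := funext fun u => (hA u).trans (fA_eq J u)
  have hBe : B = fB J := funext fun u => (hB u).trans (fB_eq J u)
  subst hAe hBe
  set θ := |Real.tanh J| with hθdef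
  have hθ0 : 0 ≤ θ := abs_nonneg _
  have hθ1 : θ < 1 := abs_tanh_lt_one J
  have h1θ : 0 < 1 - θ := by linarith
  set M := |K| / (1 - θ) with hMdef
  have hM0 : 0 ≤ M := div_nonneg (abs_nonneg _) h1θ.le
  have hKM : |K| + θ * M = M := by
    rw [hMdef]; field_simp; ring
  -- W agrees with WB with zero boundary field
  have hWWB : ∀ (y : ℕ → ℝ) (n i : ℕ), W y n i = WB (fA J) K y n 0 i := by
    intro y n
    have key : ∀ d i, n + 1 ≤ i + d → W y n i = WB (fA J) K y n 0 i := by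
      intro d
      induction d with
      | zero => intro i hi; rw [hW0 y n i (by omega), WB_gt _ _ _ _ _ _ (by omega)]
      | succ d ihd =>
        intro i hi
        rcases Nat.lt_or_ge n i with h1 | h1
        · rw [hW0 y n i h1, WB_gt _ _ _ _ _ _ h1]
        · rcases Nat.lt_or_ge i n with h2 | h2
          · rw [hWrec y n i (by omega), WB_rec _ _ _ n 0 i h2, ihd (i+1) (by omega)]
          · have hin : i = n := by omega
            subst hin
            rw [hWrec y i i le_rfl, hW0 y i (i+1) (by omega), WB_last, fA_zero, add_zero]
    intro i; exact key (n+1) i (by omega)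
  -- uniform bound on W
  have hWbd : ∀ (y : ℕ → ℝ), (∀ j, y j = 1 ∨ y j = -1) → ∀ n i, |W y n i| ≤ M := by
    intro y hy n
    have key : ∀ d i, n + 1 ≤ i + d → |W y n i| ≤ M := by
      intro d
      induction d with
      | zero => intro i hi; rw [hW0 y n i (by omega)]; simpa using hM0
      | succ d ihd =>
        intro i hi
        rcases Nat.lt_or_ge n i with h1 | h1
        · rw [hW0 y n i h1]; simpa using hM0
        · rw [hWrec y n i h1]
          have hyi : |y i| = 1 := by rcases hy i with h | h <;> rw [h] <;> simp
          have h2 : |fA J (W y n (i+1))| ≤ θ * |W y n (i+1)| := abs_fA_le J _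
          have h3 : |W y n (i+1)| ≤ M := ihd (i+1) (by omega)
          have h4 : θ * |W y n (i+1)| ≤ θ * M := mul_le_mul_of_nonneg_left h3 hθ0
          calc |K * y i + fA J (W y n (i+1))|
              ≤ |K * y i| + |fA J (W y n (i+1))| := abs_add_le _ _
            _ ≤ |K| * 1 + θ * M := by rw [abs_mul, hyi]; linarith
            _ = M := by rw [mul_one]; exact hKM
    intro i; exact key (n+1) i (by omega)
  have hwlimbd : ∀ y, (∀ j, y j = 1 ∨ y j = -1) → ∀ i, |wlim y i| ≤ M := by
    intro y hy i
    have habs : Filter.Tendsto (fun n => |W y n i|) Filter.atTop (nhds |wlim y i|) :=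
      (hwlim y i).abs
    exact le_of_tendsto habs (Filter.Eventually.of_forall fun n => hWbd y hy n i)
  -- fixed point equation for wlim
  have hwlimrec : ∀ y i, wlim y i = K * y i + fA J (wlim y (i+1)) := by
    intro y i
    have t2 : Filter.Tendsto (fun n => K * y i + fA J (W y n (i+1))) Filter.atTop
        (nhds (K * y i + fA J (wlim y (i+1)))) :=
      Filter.Tendsto.const_add _ ((((continuous_fA J).tendsto _)).comp (hwlim y (i+1)))
    have t1 : Filter.Tendsto (fun n => W y n i) Filter.atTop
        (nhds (K * y i + fA J (wlim y (i+1)))) := by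
      apply t2.congr'
      filter_upwards [Filter.eventually_ge_atTop i] with m hm
      exact (hWrec y m i hm).symm
    exact tendsto_nhds_unique (hwlim y i) t1
  -- geometric decay of W towards wlim
  have hdecay : ∀ y, (∀ j, y j = 1 ∨ y j = -1) → ∀ n d i, i + d = n + 1 →
      |W y n i - wlim y i| ≤ θ^d * M := by
    intro y hy n d
    induction d with
    | zero =>
      intro i hi
      rw [hW0 y n i (by omega), pow_zero, one_mul, zero_sub, abs_neg]
      exact hwlimbd y hy i
    | succ d ihd =>
      intro i hi
      rw [hWrec y n i (by omega), hwlimrec y i]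
      have h1 := ihd (i+1) (by omega)
      rw [show K * y i + fA J (W y n (i+1)) - (K * y i + fA J (wlim y (i+1)))
          = fA J (W y n (i+1)) - fA J (wlim y (i+1)) by ring]
      calc |fA J (W y n (i+1)) - fA J (wlim y (i+1))|
          ≤ θ * |W y n (i+1) - wlim y (i+1)| := fA_lipschitz J _ _
        _ ≤ θ * (θ^d * M) := mul_le_mul_of_nonneg_left h1 hθ0
        _ = θ^(d+1) * M := by ring
  -- shift covariance
  have hshift : ∀ y k n i, W (fun j => y (j + k)) n i = W y (n + k) (i + k) := by
    intro y k n
    have key : ∀ d i, n + 1 ≤ i + d → W (fun j => y (j+k)) n i = W y (n+k) (i+k) := by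
      intro d
      induction d with
      | zero => intro i hi; rw [hW0 _ n i (by omega), hW0 y (n+k) (i+k) (by omega)]
      | succ d ihd =>
        intro i hi
        rcases Nat.lt_or_ge n i with h1 | h1
        · rw [hW0 _ n i h1, hW0 y (n+k) (i+k) (by omega)]
        · rw [hWrec _ n i h1, hWrec y (n+k) (i+k) (by omega), ihd (i+1) (by omega),
            show i+1+k = i+k+1 from by omega]
    intro i; exact key (n+1) i (by omega)
  have hwshift : ∀ y k, wlim (fun j => y (j + k)) 0 = wlim y k := by
    intro y k
    have t1 : Filter.Tendsto (fun m => W y (m+k) k) Filter.atTop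
        (nhds (wlim (fun j => y (j+k)) 0)) := by
      apply (hwlim (fun j => y (j+k)) 0).congr
      intro m
      simpa using hshift y k m 0
    have t2 : Filter.Tendsto (fun m => W y (m+k) k) Filter.atTop (nhds (wlim y k)) :=
      (hwlim y k).comp (Filter.tendsto_add_atTop_nat k)
    exact tendsto_nhds_unique t1 t2
  -- constants
  have hlog2 : 0 ≤ Real.log 2 := Real.log_nonneg one_le_two
  set C0 := 2 * (Real.log 2 + |J| + M) + M / (1 - θ) with hC0def
  have hC0 : 0 ≤ C0 := by
    have : 0 ≤ M / (1 - θ) := div_nonneg hM0 h1θ.le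
    have := abs_nonneg J
    rw [hC0def]; linarith
  refine ⟨Real.exp C0, Real.one_le_exp hC0, ?_⟩
  intro y hy n
  have hlampos : 0 < lam := by rw [hlam]; positivity
  have hlamexp : Real.exp ((↑n + 1) * Real.log lam) = lam ^ (n+1) := by
    rw [show ((n:ℝ) + 1) = ((n+1 : ℕ) : ℝ) by push_cast; ring, Real.exp_nat_mul,
      Real.exp_log hlampos]
  -- the transfer operator identity
  have hZ : (∑ x : Fin (n + 1) → Bool,
        Real.exp (J * ∑ i : Fin n, spin (x i.castSucc) * spin (x i.succ)
          + K * ∑ i : Fin (n + 1), spin (x i) * y i))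
      = 2 * Real.cosh (W y n 0) * Real.exp (∑ k ∈ Finset.range n, fB J (W y n (k+1))) := by
    have h0 : (∑ x : Fin (n + 1) → Bool,
          Real.exp (J * ∑ i : Fin n, spin (x i.castSucc) * spin (x i.succ)
            + K * ∑ i : Fin (n + 1), spin (x i) * y i)) = Ssum J K spin y n 0 := by
      rw [Ssum]
      apply Finset.sum_congr rfl
      intro x _
      rw [zero_mul, add_zero]
    rw [h0, Ssum_eq J K spin hspin y n 0]
    rw [show WB (fA J) K y n 0 0 = W y n 0 from (hWWB y n 0).symm]
    have hs : (∑ k ∈ Finset.range n, fB J (WB (fA J) K y n 0 (k+1)))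
        = ∑ k ∈ Finset.range n, fB J (W y n (k+1)) :=
      Finset.sum_congr rfl fun k _ => by rw [hWWB y n (k+1)]
    rw [hs]
  have hφsum : (∑ k ∈ Finset.range (n + 1), φ (fun i => y (i + k)))
      = ∑ k ∈ Finset.range (n + 1), fB J (wlim y k) := by
    apply Finset.sum_congr rfl
    intro k _
    rw [hφ, hwshift y k]
  set S1 := ∑ k ∈ Finset.range n, fB J (W y n (k+1)) with hS1def
  set S2 := ∑ k ∈ Finset.range (n+1), fB J (wlim y k) with hS2def
  set E := Real.log 2 + Real.log (Real.cosh J) + Real.log (Real.cosh (W y n 0)) + (S1 - S2)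
    with hEdef
  have hG : (Real.cosh J / lam ^ (n + 1) *
        ∑ x : Fin (n + 1) → Bool,
          Real.exp (J * ∑ i : Fin n, spin (x i.castSucc) * spin (x i.succ)
            + K * ∑ i : Fin (n + 1), spin (x i) * y i))
      / Real.exp ((∑ k ∈ Finset.range (n + 1), φ (fun i => y (i + k)))
          - (n + 1) * Real.log lam) = Real.exp E := by
    rw [hZ, hφsum, Real.exp_sub, hlamexp]
    have hexpE : Real.exp E = 2 * Real.cosh J * Real.cosh (W y n 0)
        * Real.exp S1 / Real.exp S2 := by
      rw [hEdef, Real.exp_add, Real.exp_add, Real.exp_add, Real.exp_sub,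
        Real.exp_log two_pos, Real.exp_log (Real.cosh_pos _), Real.exp_log (Real.cosh_pos _)]
      ring
    rw [hexpE]
    have hl : lam ^ (n+1) ≠ 0 := pow_ne_zero _ hlampos.ne'
    field_simp
  -- bound on |E|
  have hbd3 : Real.log (Real.cosh (W y n 0)) ≤ M :=
    (log_cosh_le_abs _).trans (hWbd y hy n 0)
  have hbd2 : Real.log (Real.cosh J) ≤ |J| := log_cosh_le_abs J
  have hSdiff : |S1 - S2| ≤ M / (1 - θ) + (Real.log 2 + |J| + M) := by
    have hs2 : S2 = (∑ k ∈ Finset.range n, fB J (wlim y (k+1))) + fB J (wlim y 0) := by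
      rw [hS2def]
      exact Finset.sum_range_succ' (fun k => fB J (wlim y k)) n
    have hsd : S1 - S2 = (∑ k ∈ Finset.range n,
        (fB J (W y n (k+1)) - fB J (wlim y (k+1)))) - fB J (wlim y 0) := by
      rw [hs2, hS1def, Finset.sum_sub_distrib]
      ring
    have hterm : ∀ k ∈ Finset.range n,
        |fB J (W y n (k+1)) - fB J (wlim y (k+1))| ≤ θ^(n-k) * M := by
      intro k hk
      have hk' : k < n := Finset.mem_range.mp hk
      exact (fB_lipschitz J _ _).trans (hdecay y hy n (n-k) (k+1) (by omega))
    have habs : |∑ k ∈ Finset.range n, (fB J (W y n (k+1)) - fB J (wlim y (k+1)))|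
        ≤ ∑ k ∈ Finset.range n, θ^(n-k) * M :=
      (Finset.abs_sum_le_sum_abs _ _).trans (Finset.sum_le_sum hterm)
    have hre : (∑ k ∈ Finset.range n, θ^(n-k) * M) = ∑ j ∈ Finset.range n, θ^(j+1) * M := by
      rw [← Finset.sum_range_reflect (fun j => θ^(j+1) * M) n]
      apply Finset.sum_congr rfl
      intro j hj
      have : n - 1 - j + 1 = n - j := by
        have := Finset.mem_range.mp hj; omega
      rw [this]
    have hgs : (∑ j ∈ Finset.range n, θ^j) ≤ 1/(1-θ) := by
      rw [geom_sum_eq (ne_of_lt hθ1) n,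
        show (θ^n - 1)/(θ - 1) = (1 - θ^n)/(1-θ) by rw [← neg_div_neg_eq]; ring_nf]
      have hp : 0 ≤ θ^n := pow_nonneg hθ0 n
      gcongr
      linarith
    have hfac : (∑ j ∈ Finset.range n, θ^(j+1) * M) = (∑ j ∈ Finset.range n, θ^j) * (θ*M) := by
      rw [Finset.sum_mul]
      apply Finset.sum_congr rfl
      intro j _
      rw [pow_succ]; ring
    have hθM : 0 ≤ θ * M := mul_nonneg hθ0 hM0
    have hgeo : (∑ j ∈ Finset.range n, θ^(j+1) * M) ≤ M / (1-θ) := by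
      rw [hfac]
      calc (∑ j ∈ Finset.range n, θ^j) * (θ*M) ≤ (1/(1-θ)) * (θ*M) :=
            mul_le_mul_of_nonneg_right hgs hθM
        _ = (θ*M)/(1-θ) := by ring
        _ ≤ M/(1-θ) := by
            gcongr
            nlinarith
    have hfB0 : |fB J (wlim y 0)| ≤ Real.log 2 + |J| + M := abs_fB_le J M _ (hwlimbd y hy 0)
    calc |S1 - S2| = |(∑ k ∈ Finset.range n, (fB J (W y n (k+1)) - fB J (wlim y (k+1))))
          - fB J (wlim y 0)| := by rw [hsd]
      _ ≤ |∑ k ∈ Finset.range n, (fB J (W y n (k+1)) - fB J (wlim y (k+1)))|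
          + |fB J (wlim y 0)| := abs_sub _ _
      _ ≤ M / (1-θ) + (Real.log 2 + |J| + M) := by
          have := habs.trans (le_of_eq hre) |>.trans hgeo
          linarith
  have hE : |E| ≤ C0 := by
    have e1 : 0 ≤ Real.log (Real.cosh J) := log_cosh_nonneg J
    have e2 : 0 ≤ Real.log (Real.cosh (W y n 0)) := log_cosh_nonneg _
    have e3 := abs_le.mp hSdiff
    rw [hEdef, hC0def, abs_le]
    constructor
    · have := e3.1; have := abs_nonneg J; linarith
    · have := e3.2; linarith
  rw [hG]
  constructor
  · rw [one_div, ← Real.exp_neg]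
    exact Real.exp_le_exp.mpr (by linarith [(abs_le.mp hE).1])
  · exact Real.exp_le_exp.mpr (by linarith [(abs_le.mp hE).2])
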